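/- For every product p and every closed μLf formula φf, the LTS F|p satisfies the translated formula sm(φf, p) (at its initial state, with empty environment) if and only if p satisfies φf with respect to the FTS F (at its initial state, with empty environment). -/
import Mathlib


namespace SPLmu

/-- A feature transition system: `theta s a t` is the feature expression
(identified with the set of products satisfying it) guarding the transition. -/
structure FTS (S A P : Type) where
  theta : S → A → S → Set P
  init : S

/-- A labeled transition system. -/
structure LTS (S A : Type) where
  trans : S → A → S → Prop
  init : S

/-- Projection of an FTS onto a product. -/
def FTS.proj {S A P : Type} (F : FTS S A P) (p : P) : LTS S A :=
  ⟨fun s a t => p ∈ F.theta s a t, F.init⟩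

/-- Knaster–Tarski least (pre)fixpoint. -/
def slfp {α : Type} (f : Set α → Set α) : Set α := ⋂₀ {V | f V ⊆ V}

/-- Knaster–Tarski greatest (post)fixpoint. -/
def sgfp {α : Type} (f : Set α → Set α) : Set α := ⋃₀ {V | V ⊆ f V}

/-- The modal mu-calculus μL. -/
inductive MuL (A X : Type) : Type where
  | bot | top
  | neg : MuL A X → MuL A X
  | or  : MuL A X → MuL A X → MuL A X
  | and : MuL A X → MuL A X → MuL A X
  | dia : A → MuL A X → MuL A X
  | box : A → MuL A X → MuL A X
  | var : X → MuL A X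
  | mu  : X → MuL A X → MuL A X
  | nu  : X → MuL A X → MuL A X

/-- The feature mu-calculus μLf (also used as the syntax of μL'f, whose
modality ⟪a|χ⟫ corresponds to `dia`; the translation `fm` is then the identity). -/
inductive MuLf (A X P : Type) : Type where
  | bot | top
  | neg : MuLf A X P → MuLf A X P
  | or  : MuLf A X P → MuLf A X P → MuLf A X P
  | and : MuLf A X P → MuLf A X P → MuLf A X P
  | dia : A → Set P → MuLf A X P → MuLf A X P
  | box : A → Set P → MuLf A X P → MuLf A X P
  | var : X → MuLf A X P
  | mu  : X → MuLf A X P → MuLf A X P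
  | nu  : X → MuLf A X P → MuLf A X P

variable {S A X P : Type}

/-- Standard μL semantics over an LTS. -/
def MuL.sem [DecidableEq X] (L : LTS S A) : MuL A X → (X → Set S) → Set S
  | .bot, _ => ∅
  | .top, _ => Set.univ
  | .neg φ, ε => (MuL.sem L φ ε)ᶜ
  | .or φ ψ, ε => MuL.sem L φ ε ∪ MuL.sem L ψ ε
  | .and φ ψ, ε => MuL.sem L φ ε ∩ MuL.sem L ψ ε
  | .dia a φ, ε => {s | ∃ t, L.trans s a t ∧ t ∈ MuL.sem L φ ε}
  | .box a φ, ε => {s | ∀ t, L.trans s a t → t ∈ MuL.sem L φ ε}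
  | .var x, ε => ε x
  | .mu x φ, ε => slfp (fun V => MuL.sem L φ (Function.update ε x V))
  | .nu x φ, ε => sgfp (fun V => MuL.sem L φ (Function.update ε x V))

/-- Product-based μLf semantics over an FTS (sets of state-product pairs). -/
def MuLf.sem [DecidableEq X] (F : FTS S A P) : MuLf A X P → (X → Set (S × P)) → Set (S × P)
  | .bot, _ => ∅
  | .top, _ => Set.univ
  | .neg φ, η => (MuLf.sem F φ η)ᶜ
  | .or φ ψ, η => MuLf.sem F φ η ∪ MuLf.sem F ψ η
  | .and φ ψ, η => MuLf.sem F φ η ∩ MuLf.sem F ψ η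
  | .dia a χ φ, η =>
      {sp | sp.2 ∈ χ ∧ ∃ t, sp.2 ∈ F.theta sp.1 a t ∧ (t, sp.2) ∈ MuLf.sem F φ η}
  | .box a χ φ, η =>
      {sp | sp.2 ∈ χ → ∀ t, sp.2 ∈ F.theta sp.1 a t → (t, sp.2) ∈ MuLf.sem F φ η}
  | .var x, η => η x
  | .mu x φ, η => slfp (fun V => MuLf.sem F φ (Function.update η x V))
  | .nu x φ, η => sgfp (fun V => MuLf.sem F φ (Function.update η x V))

/-- Family-based μL'f semantics over an FTS (sets of state-family pairs);
here `dia` plays the role of the family modality ⟪a|χ⟫. -/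
def MuLf.fsem [DecidableEq X] (F : FTS S A P) :
    MuLf A X P → (X → Set (S × Set P)) → Set (S × Set P)
  | .bot, _ => ∅
  | .top, _ => Set.univ
  | .neg φ, ζ => (MuLf.fsem F φ ζ)ᶜ
  | .or φ ψ, ζ => MuLf.fsem F φ ζ ∪ MuLf.fsem F ψ ζ
  | .and φ ψ, ζ => MuLf.fsem F φ ζ ∩ MuLf.fsem F ψ ζ
  | .dia a χ φ, ζ =>
      {sP | sP.2 ⊆ χ ∧ ∃ t, sP.2 ⊆ F.theta sP.1 a t ∧
        (t, sP.2 ∩ χ ∩ F.theta sP.1 a t) ∈ MuLf.fsem F φ ζ}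
  | .box a χ φ, ζ =>
      {sP | (sP.2 ∩ χ).Nonempty → ∀ t, (sP.2 ∩ χ ∩ F.theta sP.1 a t).Nonempty →
        (t, sP.2 ∩ χ ∩ F.theta sP.1 a t) ∈ MuLf.fsem F φ ζ}
  | .var x, ζ => ζ x
  | .mu x φ, ζ => slfp (fun W => MuLf.fsem F φ (Function.update ζ x W))
  | .nu x φ, ζ => sgfp (fun W => MuLf.fsem F φ (Function.update ζ x W))

-- The translation sm : μLf × 𝒫 → μL.
open Classical in
noncomputable def MuLf.sm : MuLf A X P → P → MuL A X
  | .bot, _ => .bot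
  | .top, _ => .top
  | .neg φ, p => .neg (MuLf.sm φ p)
  | .or φ ψ, p => .or (MuLf.sm φ p) (MuLf.sm ψ p)
  | .and φ ψ, p => .and (MuLf.sm φ p) (MuLf.sm ψ p)
  | .dia a χ φ, p => if p ∈ χ then .dia a (MuLf.sm φ p) else .bot
  | .box a χ φ, p => if p ∈ χ then .box a (MuLf.sm φ p) else .top
  | .var x, _ => .var x
  | .mu x φ, p => .mu x (MuLf.sm φ p)
  | .nu x φ, p => .nu x (MuLf.sm φ p)

/-- Free variables of a μLf formula. -/
def MuLf.fv : MuLf A X P → Set X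
  | .bot => ∅
  | .top => ∅
  | .neg φ => MuLf.fv φ
  | .or φ ψ => MuLf.fv φ ∪ MuLf.fv ψ
  | .and φ ψ => MuLf.fv φ ∪ MuLf.fv ψ
  | .dia _ _ φ => MuLf.fv φ
  | .box _ _ φ => MuLf.fv φ
  | .var x => {x}
  | .mu x φ => MuLf.fv φ \ {x}
  | .nu x φ => MuLf.fv φ \ {x}

/-- A μLf formula is closed if it has no free variables. -/
def MuLf.closed (φ : MuLf A X P) : Prop := MuLf.fv φ = ∅

/-- Negation-free μLf formulas. -/
def MuLf.negFree : MuLf A X P → Prop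
  | .bot => True
  | .top => True
  | .neg _ => False
  | .or φ ψ => MuLf.negFree φ ∧ MuLf.negFree ψ
  | .and φ ψ => MuLf.negFree φ ∧ MuLf.negFree ψ
  | .dia _ _ φ => MuLf.negFree φ
  | .box _ _ φ => MuLf.negFree φ
  | .var _ => True
  | .mu _ φ => MuLf.negFree φ
  | .nu _ φ => MuLf.negFree φ

/-- Diamond-free μLf formulas (no ⟨a|χ⟩ / ⟪a|χ⟫). -/
def MuLf.diaFree : MuLf A X P → Prop
  | .bot => True
  | .top => True
  | .neg φ => MuLf.diaFree φ
  | .or φ ψ => MuLf.diaFree φ ∧ MuLf.diaFree ψ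
  | .and φ ψ => MuLf.diaFree φ ∧ MuLf.diaFree ψ
  | .dia _ _ _ => False
  | .box _ _ φ => MuLf.diaFree φ
  | .var _ => True
  | .mu _ φ => MuLf.diaFree φ
  | .nu _ φ => MuLf.diaFree φ

mutual
/-- All free occurrences of `x` are under an even number of negations. -/
def MuLf.posIn (x : X) : MuLf A X P → Prop
  | .bot => True
  | .top => True
  | .neg φ => MuLf.negOcc x φ
  | .or φ ψ => MuLf.posIn x φ ∧ MuLf.posIn x ψ
  | .and φ ψ => MuLf.posIn x φ ∧ MuLf.posIn x ψ
  | .dia _ _ φ => MuLf.posIn x φ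
  | .box _ _ φ => MuLf.posIn x φ
  | .var _ => True
  | .mu y φ => y = x ∨ MuLf.posIn x φ
  | .nu y φ => y = x ∨ MuLf.posIn x φ

/-- All free occurrences of `x` are under an odd number of negations. -/
def MuLf.negOcc (x : X) : MuLf A X P → Prop
  | .bot => True
  | .top => True
  | .neg φ => MuLf.posIn x φ
  | .or φ ψ => MuLf.negOcc x φ ∧ MuLf.negOcc x ψ
  | .and φ ψ => MuLf.negOcc x φ ∧ MuLf.negOcc x ψ
  | .dia _ _ φ => MuLf.negOcc x φ
  | .box _ _ φ => MuLf.negOcc x φ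
  | .var y => y ≠ x
  | .mu y φ => y = x ∨ MuLf.negOcc x φ
  | .nu y φ => y = x ∨ MuLf.negOcc x φ
end

/-- Well-formedness: fixpoint-bound variables occur positively. -/
def MuLf.wf : MuLf A X P → Prop
  | .bot => True
  | .top => True
  | .neg φ => MuLf.wf φ
  | .or φ ψ => MuLf.wf φ ∧ MuLf.wf ψ
  | .and φ ψ => MuLf.wf φ ∧ MuLf.wf ψ
  | .dia _ _ φ => MuLf.wf φ
  | .box _ _ φ => MuLf.wf φ
  | .var _ => True
  | .mu x φ => MuLf.posIn x φ ∧ MuLf.wf φ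
  | .nu x φ => MuLf.posIn x φ ∧ MuLf.wf φ

/-- Substitution φ[¬X/X] of ¬X for the free occurrences of X. -/
def MuLf.substNegVar [DecidableEq X] (x : X) : MuLf A X P → MuLf A X P
  | .bot => .bot
  | .top => .top
  | .neg φ => .neg (MuLf.substNegVar x φ)
  | .or φ ψ => .or (MuLf.substNegVar x φ) (MuLf.substNegVar x ψ)
  | .and φ ψ => .and (MuLf.substNegVar x φ) (MuLf.substNegVar x ψ)
  | .dia a χ φ => .dia a χ (MuLf.substNegVar x φ)
  | .box a χ φ => .box a χ (MuLf.substNegVar x φ)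
  | .var y => if y = x then .neg (.var y) else .var y
  | .mu y φ => if y = x then .mu y φ else .mu y (MuLf.substNegVar x φ)
  | .nu y φ => if y = x then .nu y φ else .nu y (MuLf.substNegVar x φ)

/-- Projection from state-family sets to state-product sets. -/
def fp {S P : Type} (W : Set (S × Set P)) : Set (S × P) :=
  {sp | ∃ Pf : Set P, (sp.1, Pf) ∈ W ∧ sp.2 ∈ Pf}


private lemma sm_key {S A X P : Type} [DecidableEq X] (F : FTS S A P) (p : P)
    (phi : MuLf A X P) :
    ∀ (ε : X → Set S) (η : X → Set (S × P)),
      (∀ x, ε x = {s | (s, p) ∈ η x}) →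
      ∀ s, s ∈ MuL.sem (F.proj p) (phi.sm p) ε ↔ (s, p) ∈ MuLf.sem F phi η := by
  induction phi with
  | bot => intro ε η h s; simp [MuLf.sm, MuL.sem, MuLf.sem]
  | top => intro ε η h s; simp [MuLf.sm, MuL.sem, MuLf.sem]
  | neg φ ih => intro ε η h s; simp [MuLf.sm, MuL.sem, MuLf.sem, ih ε η h s]
  | or φ ψ ih1 ih2 =>
      intro ε η h s
      simp [MuLf.sm, MuL.sem, MuLf.sem, ih1 ε η h s, ih2 ε η h s]
  | and φ ψ ih1 ih2 =>
      intro ε η h s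
      simp [MuLf.sm, MuL.sem, MuLf.sem, ih1 ε η h s, ih2 ε η h s]
  | dia a χ φ ih =>
      intro ε η h s
      by_cases hp : p ∈ χ
      · simp only [MuLf.sm, hp, if_true, MuL.sem, MuLf.sem, FTS.proj,
          Set.mem_setOf_eq]
        constructor
        · rintro ⟨t, ht, hm⟩; exact ⟨by simp [hp], t, ht, (ih ε η h t).1 hm⟩
        · rintro ⟨_, t, ht, hm⟩; exact ⟨t, ht, (ih ε η h t).2 hm⟩
      · simp [MuLf.sm, hp, MuL.sem, MuLf.sem]
  | box a χ φ ih =>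
      intro ε η h s
      by_cases hp : p ∈ χ
      · simp only [MuLf.sm, hp, if_true, MuL.sem, MuLf.sem, FTS.proj,
          Set.mem_setOf_eq]
        constructor
        · intro H _ t ht; exact (ih ε η h t).1 (H t ht)
        · intro H t ht; exact (ih ε η h t).2 (H (by simp [hp]) t ht)
      · simp [MuLf.sm, hp, MuL.sem, MuLf.sem]
  | var x => intro ε η h s; simp [MuLf.sm, MuL.sem, MuLf.sem, h x]
  | mu x φ ih =>
      intro ε η h s
      simp only [MuLf.sm, MuL.sem, MuLf.sem, slfp, Set.mem_sInter,
        Set.mem_setOf_eq]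
      have hrel : ∀ (W : Set (S × P)),
          ∀ y, Function.update ε x {u | (u, p) ∈ W} y
            = {s | (s, p) ∈ Function.update η x W y} := by
        intro W y
        by_cases hy : y = x
        · subst hy; simp
        · simp [Function.update_of_ne hy, h y]
      constructor
      · intro H W hW
        refine H {u | (u, p) ∈ W} ?_
        intro t ht
        exact hW ((ih _ _ (hrel W) t).1 ht)
      · intro H V hV
        have hWpre : MuLf.sem F φ
            (Function.update η x {tq : S × P | tq.2 = p → tq.1 ∈ V})
            ⊆ {tq : S × P | tq.2 = p → tq.1 ∈ V} := by
          rintro ⟨t, q⟩ ht hq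
          rw [show q = p from hq] at ht
          have hπ : {u | (u, p) ∈ ({tq : S × P | tq.2 = p → tq.1 ∈ V})} = V := by
            ext u; simp
          have := (ih _ _ (hrel {tq : S × P | tq.2 = p → tq.1 ∈ V}) t).2 ht
          rw [hπ] at this
          exact hV this
        have := H _ hWpre
        exact this rfl
  | nu x φ ih =>
      intro ε η h s
      simp only [MuLf.sm, MuL.sem, MuLf.sem, sgfp, Set.mem_sUnion,
        Set.mem_setOf_eq]
      have hrel : ∀ (W : Set (S × P)),
          ∀ y, Function.update ε x {u | (u, p) ∈ W} y
            = {s | (s, p) ∈ Function.update η x W y} := by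
        intro W y
        by_cases hy : y = x
        · subst hy; simp
        · simp [Function.update_of_ne hy, h y]
      constructor
      · rintro ⟨V, hV, hsV⟩
        refine ⟨{tq : S × P | tq.2 = p ∧ tq.1 ∈ V}, ?_, rfl, hsV⟩
        rintro ⟨t, q⟩ ⟨hq, htV⟩
        have hπ : {u | (u, p) ∈ ({tq : S × P | tq.2 = p ∧ tq.1 ∈ V})} = V := by
          ext u; simp
        rw [show q = p from hq]
        refine (ih _ _ (hrel {tq : S × P | tq.2 = p ∧ tq.1 ∈ V}) t).1 ?_
        rw [hπ]
        exact hV htV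
      · rintro ⟨W, hW, hsW⟩
        refine ⟨{u | (u, p) ∈ W}, ?_, hsW⟩
        intro t ht
        exact (ih _ _ (hrel W) t).2 (hW ht)

/-- F|p satisfies sm(φf,p) iff p satisfies φf w.r.t. F
(at the initial state, with empty environments). -/
theorem stmt1 {S A X P : Type} [DecidableEq X] (F : FTS S A P) (p : P)
    (phi : MuLf A X P) (hclosed : MuLf.closed phi) :
    (F.proj p).init ∈ MuL.sem (F.proj p) (MuLf.sm phi p) (fun _ => (∅ : Set S)) ↔
      (F.init, p) ∈ MuLf.sem F phi (fun _ => (∅ : Set (S × P))) := by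
  have h : ∀ x : X, (fun _ => (∅ : Set S)) x
      = {s | (s, p) ∈ (fun _ => (∅ : Set (S × P))) x} := by
    intro x; simp
  exact sm_key F p phi _ _ h F.init

end SPLmu
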